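/- There exists a map T ∈ C¹([0,1]) with 1/2 ≤ T' ≤ 3/2, T(0) = 0, T(x) < x for x ∈ (0,1], and such that the infinite product ∏_{i ≥ 0} T'(Tⁱ(1/2)) diverges to +∞. -/

import Mathlib

open Set Filter Finset

open Real Topology


noncomputable def gg (x : ℝ) : ℝ := x^2 * Real.sin (40*π/x)
noncomputable def hh (x : ℝ) : ℝ := -gg x + 40*π*x*Real.cos (40*π/x)
noncomputable def DD (x : ℝ) : ℝ := 20 + x + 3/(40*π) * gg x
noncomputable def TT (x : ℝ) : ℝ := 20 * x / DD x
noncomputable def TT' (x : ℝ) : ℝ := 20 * (20 + 3/(40*π) * hh x) / (DD x)^2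

lemma eps_pos : 0 < 3/(40*π) := by positivity
lemma eps_le : 3/(40*π) ≤ 1/40 := by
  rw [div_le_div_iff₀ (by positivity) (by norm_num)]
  nlinarith [Real.pi_gt_three]

lemma abs_gg_le (x : ℝ) : |gg x| ≤ x^2 := by
  rw [gg, abs_mul, abs_pow, sq_abs]
  nlinarith [Real.abs_sin_le_one (40*π/x), sq_nonneg x, abs_nonneg (Real.sin (40*π/x))]

lemma abs_hh_le (x : ℝ) : |hh x| ≤ x^2 + 40*π*|x| := by
  rw [hh]
  refine (abs_add_le _ _).trans ?_
  gcongr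
  · rw [abs_neg]; exact abs_gg_le x
  · rw [abs_mul, abs_mul, abs_mul]
    have h1 : |Real.cos (40*π/x)| ≤ 1 := Real.abs_cos_le_one _
    have h2 : |(40:ℝ)| * |π| * |x| * |Real.cos (40*π/x)| ≤ |40| * |π| * |x| * 1 := by
      gcongr
    simp only [abs_of_nonneg (by norm_num : (0:ℝ) ≤ 40), abs_of_nonneg Real.pi_nonneg] at h2 ⊢
    linarith

lemma abs_eps_gg_le (x : ℝ) (hx : x ∈ Icc (0:ℝ) 1) : |3/(40*π) * gg x| ≤ 1/40 := by
  rw [abs_mul, abs_of_nonneg eps_pos.le]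
  have h1 : |gg x| ≤ 1 := (abs_gg_le x).trans (by nlinarith [hx.1, hx.2])
  calc 3/(40*π) * |gg x| ≤ (1/40) * 1 :=
        mul_le_mul eps_le h1 (abs_nonneg _) (by norm_num)
    _ = 1/40 := by norm_num

lemma abs_eps_hh_le (x : ℝ) (hx : x ∈ Icc (0:ℝ) 1) : |3/(40*π) * hh x| ≤ 4 := by
  rw [abs_mul, abs_of_nonneg eps_pos.le]
  have hx1 : x^2 ≤ 1 := by nlinarith [hx.1, hx.2]
  have hx2 : |x| ≤ 1 := by rw [abs_of_nonneg hx.1]; exact hx.2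
  have h2 : 3/(40*π) * |hh x| ≤ 3/(40*π) * (1 + 40*π) := by
    apply mul_le_mul_of_nonneg_left _ eps_pos.le
    calc |hh x| ≤ x^2 + 40*π*|x| := abs_hh_le x
      _ ≤ 1 + 40*π*1 := by gcongr
      _ = 1 + 40*π := by ring
  have h3 : 3/(40*π) * (1 + 40*π) = 3/(40*π) + 3 := by
    field_simp
  nlinarith [eps_le, eps_pos]

lemma DD_bounds (x : ℝ) (hx : x ∈ Icc (0:ℝ) 1) : 19 ≤ DD x ∧ DD x ≤ 22 := by
  have h := abs_eps_gg_le x hx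
  rw [abs_le] at h
  rw [DD]
  constructor
  · nlinarith [hx.1, hx.2, h.1]
  · nlinarith [hx.1, hx.2, h.2]

lemma DD_gt (x : ℝ) (hx : 0 < x) (hx1 : x ≤ 1) : 20 < DD x := by
  have h1 : |3/(40*π) * gg x| ≤ (1/40) * x^2 := by
    rw [abs_mul, abs_of_nonneg eps_pos.le]
    exact mul_le_mul eps_le (abs_gg_le x) (abs_nonneg _) (by norm_num)
  rw [abs_le] at h1
  rw [DD]; nlinarith [h1.1]

lemma DD_ne (x : ℝ) (hx : x ∈ Icc (0:ℝ) 1) : DD x ≠ 0 := by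
  have := (DD_bounds x hx).1; linarith

lemma DD_eq : DD = fun y => 20 + (y + 3/(40*π) * gg y) := funext fun y => by rw [DD]; ring

lemma hasDerivAt_DD (x : ℝ) (hx : x ≠ 0) :
    HasDerivAt DD (1 + 3/(40*π) * (2*x*Real.sin (40*π/x) - 40*π*Real.cos (40*π/x))) x := by
  have hinv : HasDerivAt (fun y : ℝ => 40*π/y) (-(40*π)/x^2) x := by
    have := (hasDerivAt_inv hx).const_mul (40*π)
    simpa [div_eq_mul_inv, neg_div, mul_comm] using this
  have hsin : HasDerivAt (fun y : ℝ => Real.sin (40*π/y))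
      (Real.cos (40*π/x) * (-(40*π)/x^2)) x := hinv.sin
  have hgg : HasDerivAt gg
      (2*x^(2-1)*Real.sin (40*π/x) + x^2 * (Real.cos (40*π/x) * (-(40*π)/x^2))) x :=
    (hasDerivAt_pow 2 x).mul hsin
  have h2 : HasDerivAt DD
      (0 + (1 + 3/(40*π) * (2*x^(2-1)*Real.sin (40*π/x) + x^2 * (Real.cos (40*π/x) * (-(40*π)/x^2))))) x := by
    rw [DD_eq]
    exact (hasDerivAt_const x 20).add ((hasDerivAt_id x).add (hgg.const_mul _))
  convert h2 using 1
  field_simp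
  ring

lemma hasDerivAt_TT (x : ℝ) (hx : 0 < x) (hx1 : x ≤ 1) : HasDerivAt TT (TT' x) x := by
  have hD := hasDerivAt_DD x hx.ne'
  have hDne : DD x ≠ 0 := DD_ne x ⟨hx.le, hx1⟩
  have hnum : HasDerivAt (fun y : ℝ => 20 * y) 20 x := by
    simpa using (hasDerivAt_id x).const_mul (20:ℝ)
  have h := hnum.div hD hDne
  have hTT : TT = fun y => 20 * y / DD y := funext fun y => rfl
  rw [hTT]
  convert h using 1
  · rfl
  · rfl
  · rfl
  rw [TT', hh, gg]
  rw [DD, gg] at hDne ⊢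
  have hπ : π ≠ 0 := Real.pi_ne_zero
  field_simp
  ring

lemma gg_cont_zero : ContinuousAt gg 0 := by
  have h : Tendsto gg (𝓝 0) (𝓝 0) := by
    apply squeeze_zero_norm (a := fun x => x^2)
    · intro x
      simpa [Real.norm_eq_abs, sq_abs] using abs_gg_le x
    · simpa using ((continuous_pow 2).tendsto (0:ℝ))
  have h0 : gg 0 = 0 := by simp [gg]
  rw [ContinuousAt, h0]; exact h

lemma hh_cont_zero : ContinuousAt hh 0 := by
  have h : Tendsto hh (𝓝 0) (𝓝 0) := by
    apply squeeze_zero_norm (a := fun x => x^2 + 40*π*|x|)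
    · intro x; simpa [Real.norm_eq_abs] using abs_hh_le x
    · have : Tendsto (fun x : ℝ => x^2 + 40*π*|x|) (𝓝 0) (𝓝 ((0:ℝ)^2 + 40*π*|(0:ℝ)|)) :=
        ((continuous_pow 2).add (continuous_const.mul continuous_abs)).tendsto 0
      simpa using this
  have h0 : hh 0 = 0 := by simp [hh, gg]
  rw [ContinuousAt, h0]; exact h

lemma gg_contAt (x : ℝ) (hx : x ≠ 0) : ContinuousAt gg x :=
  (continuousAt_pow x 2).mul (Real.continuous_sin.continuousAt.comp (continuousAt_const.div continuousAt_id hx))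

lemma hh_contAt (x : ℝ) (hx : x ≠ 0) : ContinuousAt hh x :=
  ((gg_contAt x hx).neg).add ((continuousAt_const.mul continuousAt_id).mul
    (Real.continuous_cos.continuousAt.comp (continuousAt_const.div continuousAt_id hx)))

lemma hh_contAt' (x : ℝ) : ContinuousAt hh x := by
  rcases eq_or_ne x 0 with rfl | hx
  · exact hh_cont_zero
  · exact hh_contAt x hx

lemma DD_contAt (x : ℝ) : ContinuousAt DD x := by
  have hg : ContinuousAt gg x := by
    rcases eq_or_ne x 0 with rfl | hx
    · exact gg_cont_zero
    · exact gg_contAt x hx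
  exact (continuousAt_const.add continuousAt_id).add (continuousAt_const.mul hg)

lemma DD_zero : DD 0 = 20 := by simp [DD, gg]

lemma TT'_zero : TT' 0 = 1 := by
  rw [TT']
  simp [hh, gg, DD_zero]
  norm_num

lemma hasDerivAt_TT_zero : HasDerivAt TT (TT' 0) 0 := by
  rw [TT'_zero, hasDerivAt_iff_tendsto_slope]
  have h1 : Tendsto (fun y => 20 / DD y) (𝓝[≠] (0:ℝ)) (𝓝 1) := by
    have : Tendsto (fun y => 20 / DD y) (𝓝 (0:ℝ)) (𝓝 (20 / DD 0)) :=
      (tendsto_const_nhds.div (DD_contAt 0) (by rw [DD_zero]; norm_num))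
    rw [DD_zero] at this
    norm_num at this
    exact this.mono_left nhdsWithin_le_nhds
  refine h1.congr' ?_
  filter_upwards [self_mem_nhdsWithin] with y hy
  have hy' : (y:ℝ) ≠ 0 := hy
  rw [slope_def_field, TT, TT, DD_zero]
  field_simp
  rw [sub_zero, sub_zero, mul_comm 20 y]

lemma TT'_bounds (x : ℝ) (hx : x ∈ Icc (0:ℝ) 1) : 1/2 ≤ TT' x ∧ TT' x ≤ 3/2 := by
  have hD := DD_bounds x hx
  have hh4 := abs_eps_hh_le x hx
  rw [abs_le] at hh4
  have hD2a : (DD x)^2 ≤ 484 := by nlinarith [hD.1, hD.2]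
  have hD2b : 361 ≤ (DD x)^2 := by nlinarith [hD.1, hD.2]
  have hD2pos : (0:ℝ) < (DD x)^2 := by nlinarith [hD.1]
  constructor
  · rw [TT', le_div_iff₀ hD2pos]; nlinarith [hh4.1]
  · rw [TT', div_le_iff₀ hD2pos]; nlinarith [hh4.2]
lemma arg_eq (n : ℕ) : 40*π/(20/((n:ℝ)+40)) = ((n+40 : ℕ) : ℝ) * (2*π) := by
  have h : ((n:ℝ)+40) ≠ 0 := by positivity
  push_cast
  field_simp
  ring

lemma sin_orbit (n : ℕ) : Real.sin (40*π/(20/((n:ℝ)+40))) = 0 := by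
  rw [arg_eq]
  have : (((n+40 : ℕ)) : ℝ) * (2*π) = ((2*(n+40) : ℕ) : ℝ) * π := by push_cast; ring
  rw [this, Real.sin_nat_mul_pi]

lemma cos_orbit (n : ℕ) : Real.cos (40*π/(20/((n:ℝ)+40))) = 1 := by
  rw [arg_eq, Real.cos_nat_mul_two_pi]

lemma gg_orbit (n : ℕ) : gg (20/((n:ℝ)+40)) = 0 := by
  rw [gg, sin_orbit, mul_zero]

lemma TT_orbit_step (n : ℕ) : TT (20/((n:ℝ)+40)) = 20/((n:ℝ)+41) := by
  have h : ((n:ℝ)+40) ≠ 0 := by positivity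
  have h41 : ((n:ℝ)+41) ≠ 0 := by positivity
  rw [TT, DD, gg_orbit, mul_zero, add_zero]
  rw [div_eq_div_iff]
  · field_simp
    ring
  · have : (0:ℝ) < 20/((n:ℝ)+40) := by positivity
    linarith
  · exact h41

lemma TT_iter (n : ℕ) : TT^[n] (1/2 : ℝ) = 20/((n:ℝ)+40) := by
  induction n with
  | zero => norm_num
  | succ n ih =>
    rw [Function.iterate_succ_apply', ih, TT_orbit_step]
    push_cast
    ring_nf

lemma TT'_orbit_ge (n : ℕ) : 1 + 1/(50*((n:ℝ)+1)) ≤ TT' (20/((n:ℝ)+40)) := by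
  have h : (0:ℝ) < (n:ℝ)+40 := by positivity
  have hπ : π ≠ 0 := Real.pi_ne_zero
  have hval : TT' (20/((n:ℝ)+40)) = ((n:ℝ)+40)*((n:ℝ)+43)/(((n:ℝ)+41)^2) := by
    rw [TT', hh, gg_orbit, cos_orbit, DD, gg_orbit]
    rw [neg_zero, zero_add, mul_zero, add_zero, mul_one]
    rw [div_eq_div_iff (by positivity) (by positivity)]
    field_simp
    ring
  have hlhs : 1 + 1/(50*((n:ℝ)+1)) = (50*((n:ℝ)+1)+1)/(50*((n:ℝ)+1)) := by
    field_simp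
  rw [hval, hlhs, div_le_div_iff₀ (by positivity) (by positivity)]
  have hn : (0:ℝ) ≤ (n:ℝ) := Nat.cast_nonneg n
  nlinarith [sq_nonneg ((n:ℝ)+1), sq_nonneg (n:ℝ)]

lemma prod_one_add_ge (u : ℕ → ℝ) (hu : ∀ i, 0 ≤ u i) (n : ℕ) :
    1 + ∑ i ∈ Finset.range n, u i ≤ ∏ i ∈ Finset.range n, (1 + u i) := by
  induction n with
  | zero => simp
  | succ n ih =>
    rw [Finset.prod_range_succ, Finset.sum_range_succ]
    have hs : 0 ≤ ∑ i ∈ Finset.range n, u i := Finset.sum_nonneg fun i _ => hu i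
    nlinarith [hu n, ih]

lemma TT'_contAt (x : ℝ) (hx : x ∈ Icc (0:ℝ) 1) : ContinuousAt TT' x := by
  have hhc : ContinuousAt hh x := hh_contAt' x
  have hDc : ContinuousAt DD x := DD_contAt x
  have hDne : (DD x)^2 ≠ 0 := pow_ne_zero 2 (DD_ne x hx)
  exact (continuousAt_const.mul (continuousAt_const.add (continuousAt_const.mul hhc))).div
    (hDc.pow 2) hDne

lemma tendsto_lower :
    Tendsto (fun n : ℕ => 1 + ∑ i ∈ Finset.range n, 1/(50*((i:ℝ)+1))) atTop atTop := by
  have h1 : Tendsto (fun n : ℕ => ∑ i ∈ Finset.range n, (1/((i:ℝ)+1))) atTop atTop :=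
    Real.tendsto_sum_range_one_div_nat_succ_atTop
  have h2 : Tendsto (fun n : ℕ => (1/50 : ℝ) * ∑ i ∈ Finset.range n, (1/((i:ℝ)+1))) atTop atTop :=
    h1.const_mul_atTop (by norm_num)
  have h3 : (fun n : ℕ => 1 + ∑ i ∈ Finset.range n, 1/(50*((i:ℝ)+1)))
      = fun n : ℕ => 1 + (1/50 : ℝ) * ∑ i ∈ Finset.range n, (1/((i:ℝ)+1)) := by
    funext n
    rw [Finset.mul_sum]
    congr 1
    apply Finset.sum_congr rfl
    intro i _
    field_simp
  rw [h3]
  exact tendsto_atTop_add_const_left atTop 1 h2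

/-- There exists a `C¹` map `T` on `[0,1]` with `1/2 ≤ T' ≤ 3/2`, `T 0 = 0`,
`T x < x` on `(0,1]`, such that the product `∏_{i<n} T'(Tⁱ(1/2))` diverges
to `+∞`. -/
theorem exists_map_with_divergent_product :
    ∃ T T' : ℝ → ℝ,
      (∀ x ∈ Icc (0:ℝ) 1, HasDerivAt T (T' x) x) ∧
      ContinuousOn T' (Icc (0:ℝ) 1) ∧
      (∀ x ∈ Icc (0:ℝ) 1, 1/2 ≤ T' x ∧ T' x ≤ 3/2) ∧
      T 0 = 0 ∧
      (∀ x ∈ Ioc (0:ℝ) 1, T x < x) ∧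
      Tendsto (fun n : ℕ => ∏ i ∈ Finset.range n, T' (T^[i] (1/2 : ℝ)))
        atTop atTop := by
  refine ⟨TT, TT', ?_, ?_, ?_, ?_, ?_, ?_⟩
  · intro x hx
    rcases eq_or_lt_of_le hx.1 with h0 | h0
    · rw [← h0]; exact hasDerivAt_TT_zero
    · exact hasDerivAt_TT x h0 hx.2
  · exact fun x hx => (TT'_contAt x hx).continuousWithinAt
  · exact TT'_bounds
  · rw [TT]; simp
  · intro x hx
    have hD : 20 < DD x := DD_gt x hx.1 hx.2
    rw [TT, div_lt_iff₀ (by linarith)]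
    nlinarith [hx.1]
  · apply tendsto_atTop_mono _ tendsto_lower
    intro n
    calc 1 + ∑ i ∈ Finset.range n, 1/(50*((i:ℝ)+1))
        ≤ ∏ i ∈ Finset.range n, (1 + 1/(50*((i:ℝ)+1))) :=
          prod_one_add_ge _ (fun i => by positivity) n
      _ ≤ ∏ i ∈ Finset.range n, TT' (TT^[i] (1/2 : ℝ)) := by
          apply Finset.prod_le_prod
          · intro i _; positivity
          · intro i _
            rw [TT_iter i]
            exact TT'_orbit_ge i
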